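/- Let H ⊆ A be the F-subspace spanned by {L_{i,i}^t : i, t ∈ ½ℤ}. For any l, m, r ∈ ½ℤ: (a) [L_{l,m}^r, H, H] ⊆ H if and only if l = m (i.e., if and only if L_{l,m}^r ∈ H); and (b) L_{l,m}^r · L_{i,i}^t ∈ H for all i, t ∈ ½ℤ if and only if l = m. -/

import Mathlib

noncomputable section

/-- The half-integers `½ℤ = {k/2 : k ∈ ℤ}` as an additive subgroup of `ℚ`. -/
def HalfInt : AddSubgroup ℚ where
  carrier := {q | ∃ k : ℤ, q = k / 2}
  add_mem' := by rintro a b ⟨k, rfl⟩ ⟨j, rfl⟩; exact ⟨k + j, by push_cast; ring⟩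
  zero_mem' := ⟨0, by norm_num⟩
  neg_mem' := by rintro a ⟨k, rfl⟩; exact ⟨-k, by push_cast; ring⟩

/-- The half-integer `k/2`. -/
def hh (k : ℤ) : HalfInt := ⟨(k : ℚ) / 2, ⟨k, rfl⟩⟩

variable (F : Type*) [Field F] [CharZero F]

/-- `A` is the group algebra of `(½ℤ)³` over `F`; the basis element indexed by
`(l, m, r)` is `L_{l,m}^r`. -/
abbrev A := AddMonoidAlgebra F (HalfInt × HalfInt × HalfInt)

/-- The basis element `L_{l,m}^r` of `A`. -/
def L (l m r : HalfInt) : A F := AddMonoidAlgebra.single (l, m, r) 1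

/-- `M(α₁,α₂,α₃)`: the determinant of the 3×3 matrix with rows `(r₁,r₂,r₃)`,
`(l₁,l₂,l₃)`, `(m₁,m₂,m₃)`, computed in `ℚ` and mapped into `F`.
Here an index `α = (l, m, r)`. -/
def Mdet (α β γ : HalfInt × HalfInt × HalfInt) : F :=
  ((Matrix.det !![(α.2.2 : ℚ), (β.2.2 : ℚ), (γ.2.2 : ℚ);
                  (α.1 : ℚ),   (β.1 : ℚ),   (γ.1 : ℚ);
                  (α.2.1 : ℚ), (β.2.1 : ℚ), (γ.2.1 : ℚ)] : ℚ) : F)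

/-- The shift `ν = (1, 1, 0)` (in coordinates `(l, m, r)`). -/
def nu : HalfInt × HalfInt × HalfInt := (hh 2, hh 2, hh 0)

/-- The alternating trilinear bracket on `A`, determined on basis elements by
`[L_{l₁,m₁}^{r₁}, L_{l₂,m₂}^{r₂}, L_{l₃,m₃}^{r₃}]
  = M(α₁,α₂,α₃) · L_{l₁+l₂+l₃-1, m₁+m₂+m₃-1}^{r₁+r₂+r₃}`. -/
def bracket (x y z : A F) : A F :=
  Finsupp.sum x.coeff fun α a => Finsupp.sum y.coeff fun β b => Finsupp.sum z.coeff fun γ c =>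
    AddMonoidAlgebra.single (α + β + γ - nu) (a * b * c * Mdet F α β γ)

/-- The subspace `H` of `A` spanned by `{L_{i,i}^t : i, t ∈ ½ℤ}`. -/
def H (F : Type*) [Field F] [CharZero F] : Submodule F (A F) :=
  Submodule.span F {x : A F | ∃ i t : HalfInt, x = L F i i t}


lemma H_eq : H F = Submodule.map ((AddMonoidAlgebra.coeffLinearEquiv (S := F)
      (M := HalfInt × HalfInt × HalfInt) F).symm : (HalfInt × HalfInt × HalfInt →₀ F) →ₗ[F] A F)
    (Finsupp.supported F F {p : HalfInt × HalfInt × HalfInt | p.1 = p.2.1}) := by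
  rw [Finsupp.supported_eq_span_single, Submodule.map_span]
  unfold H
  congr 1
  ext x
  constructor
  · rintro ⟨i, t, rfl⟩; exact ⟨_, ⟨(i, i, t), rfl, rfl⟩, rfl⟩
  · rintro ⟨_, ⟨⟨a, b, c⟩, hp, rfl⟩, rfl⟩
    exact ⟨a, c, by simp only [Set.mem_setOf_eq] at hp; cases hp; rfl⟩

lemma mem_H_iff (x : A F) : x ∈ H F ↔ ∀ p ∈ x.coeff.support, p.1 = p.2.1 := by
  rw [H_eq, Submodule.mem_map_equiv, Finsupp.mem_supported]
  constructor
  · intro h p hp; exact h hp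
  · intro h p hp; exact h p hp

lemma single_mem_H (p : HalfInt × HalfInt × HalfInt) (c : F) (h : p.1 = p.2.1) :
    AddMonoidAlgebra.single p c ∈ H F := by
  rw [mem_H_iff]
  intro q hq
  have := Finsupp.support_single_subset hq
  simp only [Finset.mem_singleton] at this
  subst this; exact h

lemma mem_H_single (p : HalfInt × HalfInt × HalfInt) (c : F) (hc : c ≠ 0)
    (h : AddMonoidAlgebra.single p c ∈ H F) : p.1 = p.2.1 := by
  rw [mem_H_iff] at h
  exact h p (by rw [AddMonoidAlgebra.coeff_single, Finsupp.support_single_ne_zero _ hc]; exact Finset.mem_singleton_self p)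

lemma bracket_single (α β γ : HalfInt × HalfInt × HalfInt) (a b c : F) :
    bracket F (AddMonoidAlgebra.single α a) (AddMonoidAlgebra.single β b)
      (AddMonoidAlgebra.single γ c)
      = AddMonoidAlgebra.single (α + β + γ - nu) (a * b * c * Mdet F α β γ) := by
  unfold bracket
  simp only [AddMonoidAlgebra.coeff_single]
  rw [Finsupp.sum_single_index, Finsupp.sum_single_index, Finsupp.sum_single_index]
  · simp
  · simp [Finsupp.sum_single_index]
  · simp [Finsupp.sum_single_index]

lemma cancel_half (x y : HalfInt) (h : x + hh 2 + 0 - hh 2 = y + hh 2 + 0 - hh 2) : x = y := by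
  apply Subtype.ext
  have h' := Subtype.ext_iff.mp h
  push_cast at h'
  linarith


/-- for any `l, m, r ∈ ½ℤ`: (a) `[L_{l,m}^r, H, H] ⊆ H` iff `l = m`
(equivalently, iff `L_{l,m}^r ∈ H`); and (b) `L_{l,m}^r · L_{i,i}^t ∈ H` for all
`i, t ∈ ½ℤ` iff `l = m`. -/
theorem H_normalizer (l m r : HalfInt) :
    ((∀ a ∈ H F, ∀ b ∈ H F, bracket F (L F l m r) a b ∈ H F) ↔ l = m)
      ∧ (L F l m r ∈ H F ↔ l = m)
      ∧ ((∀ i t : HalfInt, L F l m r * L F i i t ∈ H F) ↔ l = m) := by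
  refine ⟨⟨?_, ?_⟩, ⟨?_, ?_⟩, ?_, ?_⟩
  · -- (a) forward
    intro h
    by_contra hne
    have hb1 : L F (hh 2) (hh 2) (hh 0) ∈ H F := Submodule.subset_span ⟨_, _, rfl⟩
    have hb2 : L F 0 0 (hh 2) ∈ H F := Submodule.subset_span ⟨_, _, rfl⟩
    have hbr := h _ hb1 _ hb2
    rw [L, L, L, bracket_single] at hbr
    have hM : Mdet F (l, m, r) (hh 2, hh 2, hh 0) (0, 0, hh 2) = (((l : ℚ) - (m : ℚ) : ℚ) : F) := by
      rw [Mdet]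
      norm_num [Matrix.det_fin_three, hh, Matrix.vecHead, Matrix.vecTail, Matrix.cons_val, Matrix.cons_val_zero, Matrix.cons_val_one,
        Matrix.cons_val_two]
    have hc : (1 * 1 * 1 * Mdet F (l, m, r) (hh 2, hh 2, hh 0) (0, 0, hh 2) : F) ≠ 0 := by
      rw [hM]
      simp only [one_mul]
      rw [Rat.cast_ne_zero, sub_ne_zero]
      exact fun hq => hne (Subtype.ext hq)
    have hd := mem_H_single F _ _ hc hbr
    exact hne (cancel_half l m hd)
  · -- (a) backward
    rintro rfl a ha b hb
    unfold bracket
    rw [L, AddMonoidAlgebra.coeff_single, Finsupp.sum_single_index]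
    · apply Submodule.finsuppSum_mem
      intro β hβne
      apply Submodule.finsuppSum_mem
      intro γ hγne
      apply single_mem_H
      have hβ := (mem_H_iff F a).mp ha β (Finsupp.mem_support_iff.mpr hβne)
      have hγ := (mem_H_iff F b).mp hb γ (Finsupp.mem_support_iff.mpr hγne)
      show ((l, l, r) + β + γ - nu).1 = ((l, l, r) + β + γ - nu).2.1
      simp [nu, hβ, hγ]
    · simp [Finsupp.sum]
  · -- (ii) forward
    intro h
    exact mem_H_single F (l, m, r) 1 one_ne_zero h
  · -- (ii) backward
    rintro rfl
    exact Submodule.subset_span ⟨l, r, rfl⟩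
  · -- (b) forward
    intro h
    have h0 := h 0 0
    rw [L, L, AddMonoidAlgebra.single_mul_single] at h0
    have hd := mem_H_single F _ _ (by norm_num : (1 * 1 : F) ≠ 0) h0
    simpa using hd
  · -- (b) backward
    rintro rfl i t
    rw [L, L, AddMonoidAlgebra.single_mul_single]
    exact single_mem_H F _ _ rfl
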